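/- Fix an integer p ≥ 1, a symmetric positive definite matrix Σ ∈ ℝ^{p×p}, a real τ > 0, and set n = tr((Σ + τ I)^{-1} Σ) and Ω = (1/n) tr(Σ²(Σ + τ I)^{-2}); assume 0 < Ω < 1. Fix β*, b ∈ ℝ^p and σ² ≥ 0, let θ₁ = (Σ + τ I)^{-1} Σ and γ²(b) = (p/n) (σ² + τ² ‖(Σ + τ I)^{-1} Σ^{1/2} b‖²)/(1 − Ω), and define R̄(β*, b) = (b − β*)ᵀ θ₁ᵀ Σ θ₁ (b − β*) + γ²(b) tr(Σ²(Σ+τI)^{-2})/p + β*ᵀ(I − θ₁)ᵀ Σ (I − θ₁) β* − 2 β*ᵀ(I − θ₁)ᵀ Σ θ₁ (b − β*). Then (i) R̄(β*, b) = ‖Σ^{1/2}(θ₁ b − β*)‖² + (Ω/(1 − Ω)) (σ² + τ² ‖(Σ + τ I)^{-1} Σ^{1/2} b‖²), and (ii) γ²(b) satisfies the fixed-point equation γ²(b) = (p/n)(σ² + R̄(b, b)). -/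

import Mathlib

open Matrix

/-- `Matrix.PosSemidef.sqrt` was removed from Mathlib; restored here with its old definition. -/
noncomputable def Matrix.PosSemidef.sqrt {n 𝕜 : Type*} [Fintype n] [RCLike 𝕜] [PartialOrder 𝕜]
    [DecidableEq n]
    {A : Matrix n n 𝕜} (hA : A.PosSemidef) : Matrix n n 𝕜 :=
  hA.1.eigenvectorUnitary.1 * diagonal (fun i => ((hA.1.eigenvalues i).sqrt : 𝕜))
    * (star hA.1.eigenvectorUnitary : Matrix n n 𝕜)

private lemma sqrt_mul_self_aux {p : ℕ} {A : Matrix (Fin p) (Fin p) ℝ} (hA : A.PosSemidef) :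
    hA.sqrt * hA.sqrt = A := by
  unfold Matrix.PosSemidef.sqrt
  conv_rhs => rw [hA.1.spectral_theorem, Unitary.conjStarAlgAut_apply]
  have hU : (star hA.1.eigenvectorUnitary : Matrix (Fin p) (Fin p) ℝ) * hA.1.eigenvectorUnitary.1 = 1 :=
    Unitary.coe_star_mul_self _
  calc _ = hA.1.eigenvectorUnitary.1 * (diagonal (fun i => ((hA.1.eigenvalues i).sqrt : ℝ)) *
        ((star hA.1.eigenvectorUnitary : Matrix (Fin p) (Fin p) ℝ) * hA.1.eigenvectorUnitary.1) *
        diagonal (fun i => ((hA.1.eigenvalues i).sqrt : ℝ))) *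
        (star hA.1.eigenvectorUnitary : Matrix (Fin p) (Fin p) ℝ) := by
        simp only [Matrix.mul_assoc, RCLike.ofReal_real_eq_id, id]
    _ = _ := by
        rw [hU, Matrix.mul_one, diagonal_mul_diagonal]
        congr 3
        funext i
        simp [Real.mul_self_sqrt (hA.eigenvalues_nonneg i)]

private lemma sqrt_transpose_aux {p : ℕ} {A : Matrix (Fin p) (Fin p) ℝ} (hA : A.PosSemidef) :
    hA.sqrtᵀ = hA.sqrt := by
  unfold Matrix.PosSemidef.sqrt
  rw [← conjTranspose_eq_transpose_of_trivial, star_eq_conjTranspose]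
  exact (isHermitian_mul_mul_conjTranspose _ (isHermitian_diagonal _)).eq

private lemma mv_dot_aux {p : ℕ} (K : Matrix (Fin p) (Fin p) ℝ) (u v : Fin p → ℝ) :
    (K.mulVec u) ⬝ᵥ v = u ⬝ᵥ (Kᵀ.mulVec v) := by
  rw [dotProduct_comm, dotProduct_mulVec, dotProduct_comm, ← mulVec_transpose]

/-- Closed form of the asymptotic surrogate-to-target risk and the
fixed-point equation for `γ²`. -/
theorem surrogate_risk_closed_form_and_fixed_point
    (p : ℕ) (hp : 1 ≤ p)
    (Cov : Matrix (Fin p) (Fin p) ℝ) (hCov : Cov.PosDef)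
    (τ : ℝ) (hτ : 0 < τ)
    (n Ω : ℝ)
    (hn : n = ((Cov + τ • (1 : Matrix (Fin p) (Fin p) ℝ))⁻¹ * Cov).trace)
    (hΩ : Ω = (1 / n) * (Cov ^ 2 * ((Cov + τ • (1 : Matrix (Fin p) (Fin p) ℝ))⁻¹) ^ 2).trace)
    (hΩ0 : 0 < Ω) (hΩ1 : Ω < 1)
    (βstar b : Fin p → ℝ) (σsq : ℝ) (hσ : 0 ≤ σsq)
    (θ1 : Matrix (Fin p) (Fin p) ℝ)
    (hθ1 : θ1 = (Cov + τ • (1 : Matrix (Fin p) (Fin p) ℝ))⁻¹ * Cov)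
    (γsq : (Fin p → ℝ) → ℝ)
    (hγ : ∀ v : Fin p → ℝ, γsq v = ((p : ℝ) / n) * (σsq + τ ^ 2 *
      ((((Cov + τ • (1 : Matrix (Fin p) (Fin p) ℝ))⁻¹ * hCov.posSemidef.sqrt).mulVec v) ⬝ᵥ
       (((Cov + τ • (1 : Matrix (Fin p) (Fin p) ℝ))⁻¹ * hCov.posSemidef.sqrt).mulVec v))) / (1 - Ω))
    (Rbar : (Fin p → ℝ) → (Fin p → ℝ) → ℝ)
    (hR : ∀ β v : Fin p → ℝ, Rbar β v =
      (θ1.mulVec (v - β)) ⬝ᵥ (Cov.mulVec (θ1.mulVec (v - β)))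
      + γsq v * (Cov ^ 2 * ((Cov + τ • (1 : Matrix (Fin p) (Fin p) ℝ))⁻¹) ^ 2).trace / p
      + ((1 - θ1).mulVec β) ⬝ᵥ (Cov.mulVec ((1 - θ1).mulVec β))
      - 2 * (((1 - θ1).mulVec β) ⬝ᵥ (Cov.mulVec (θ1.mulVec (v - β))))) :
    Rbar βstar b =
      ((hCov.posSemidef.sqrt.mulVec (θ1.mulVec b - βstar)) ⬝ᵥ
        (hCov.posSemidef.sqrt.mulVec (θ1.mulVec b - βstar)))
      + (Ω / (1 - Ω)) * (σsq + τ ^ 2 *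
        ((((Cov + τ • (1 : Matrix (Fin p) (Fin p) ℝ))⁻¹ * hCov.posSemidef.sqrt).mulVec b) ⬝ᵥ
         (((Cov + τ • (1 : Matrix (Fin p) (Fin p) ℝ))⁻¹ * hCov.posSemidef.sqrt).mulVec b)))
    ∧ γsq b = ((p : ℝ) / n) * (σsq + Rbar b b) := by
  set A : Matrix (Fin p) (Fin p) ℝ := Cov + τ • (1 : Matrix (Fin p) (Fin p) ℝ) with hAdef
  set M : Matrix (Fin p) (Fin p) ℝ := hCov.posSemidef.sqrt with hMdef
  -- basic facts
  have hA : A.PosDef := by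
    refine hCov.add_posSemidef ?_
    rw [smul_one_eq_diagonal]
    exact posSemidef_diagonal_iff.mpr fun i => le_of_lt hτ
  have hAu : IsUnit A.det := hA.det_pos.ne'.isUnit
  have hAt : Aᵀ = A := by rw [← conjTranspose_eq_transpose_of_trivial]; exact hA.isHermitian.eq
  have hMt : Mᵀ = M := sqrt_transpose_aux hCov.posSemidef
  have hCt : Covᵀ = Cov := by rw [← conjTranspose_eq_transpose_of_trivial]; exact hCov.isHermitian.eq
  have hMM : M * M = Cov := sqrt_mul_self_aux hCov.posSemidef
  have hAit : A⁻¹ᵀ = A⁻¹ := by rw [transpose_nonsing_inv, hAt]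
  have hAAi : A * A⁻¹ = 1 := mul_nonsing_inv A hAu
  have hAiA : A⁻¹ * A = 1 := nonsing_inv_mul A hAu
  -- commutation with A⁻¹
  have comm_inv : ∀ X : Matrix (Fin p) (Fin p) ℝ, X * A = A * X → X * A⁻¹ = A⁻¹ * X := by
    intro X h
    have e1 : A⁻¹ * (A * X) * A⁻¹ = X * A⁻¹ := by
      rw [← Matrix.mul_assoc A⁻¹ A X, hAiA, Matrix.one_mul]
    have e2 : A⁻¹ * (X * A) * A⁻¹ = A⁻¹ * X := by
      rw [Matrix.mul_assoc, Matrix.mul_assoc, hAAi, Matrix.mul_one]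
    rw [← e1, ← e2, h]
  have hMC : M * Cov = Cov * M := by rw [← hMM, Matrix.mul_assoc]
  have hMA : M * A = A * M := by
    rw [hAdef, mul_add, add_mul, hMC, Matrix.mul_smul, Matrix.smul_mul, mul_one, one_mul]
  have hCA : Cov * A = A * Cov := by
    rw [hAdef, mul_add, add_mul, Matrix.mul_smul, Matrix.smul_mul, mul_one, one_mul]
  have hMAi : M * A⁻¹ = A⁻¹ * M := comm_inv M hMA
  have hCAi : Cov * A⁻¹ = A⁻¹ * Cov := comm_inv Cov hCA
  -- 1 - θ1 = τ • A⁻¹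
  have hθτ : (1 : Matrix (Fin p) (Fin p) ℝ) - θ1 = τ • A⁻¹ := by
    have h1 : θ1 + τ • A⁻¹ = 1 := by
      rw [hθ1]
      have : A⁻¹ * Cov + τ • A⁻¹ = A⁻¹ * (Cov + τ • 1) := by
        rw [mul_add, Matrix.mul_smul, mul_one]
      rw [this, ← hAdef, hAiA]
    linear_combination (norm := abel) h1.symm
  -- nonzero scalars
  have hn0 : n ≠ 0 := by
    intro h
    rw [h] at hΩ
    simp at hΩ
    rw [hΩ] at hΩ0
    exact lt_irrefl 0 hΩ0
  have hp0 : (p : ℝ) ≠ 0 := by positivity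
  have h1Ω : (1 : ℝ) - Ω ≠ 0 := sub_ne_zero.mpr hΩ1.ne'
  -- trace identity
  have hT : (Cov ^ 2 * (A⁻¹) ^ 2).trace = n * Ω := by
    rw [hΩ]; field_simp
  -- sqrt quadratic form
  have key1 : ∀ u : Fin p → ℝ, (M.mulVec u) ⬝ᵥ (M.mulVec u) = u ⬝ᵥ (Cov.mulVec u) := by
    intro u
    rw [mv_dot_aux, hMt, mulVec_mulVec, hMM]
  -- Cov-symmetry of the bilinear form
  have hsym : ∀ x y : Fin p → ℝ, x ⬝ᵥ (Cov.mulVec y) = y ⬝ᵥ (Cov.mulVec x) := by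
    intro x y
    rw [dotProduct_mulVec, ← hCt, ← mulVec_transpose, dotProduct_comm, hCt, hCt]
  -- key2: the τ² ‖A⁻¹ Σ^{1/2} b‖² identity
  have key2 : ∀ u : Fin p → ℝ,
      ((A⁻¹ * M).mulVec u) ⬝ᵥ ((A⁻¹ * M).mulVec u)
        = (A⁻¹.mulVec u) ⬝ᵥ (Cov.mulVec (A⁻¹.mulVec u)) := by
    intro u
    have hmat : (A⁻¹ * M)ᵀ * A⁻¹ * M = A⁻¹ᵀ * Cov * A⁻¹ := by
      rw [transpose_mul, hMt, hAit]
      simp only [Matrix.mul_assoc]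
      rw [← Matrix.mul_assoc M A⁻¹ (A⁻¹ * M), hMAi,
        Matrix.mul_assoc A⁻¹ M (A⁻¹ * M), ← Matrix.mul_assoc M A⁻¹ M, hMAi,
        Matrix.mul_assoc A⁻¹ M M, hMM, ← hCAi]
    rw [mv_dot_aux, mulVec_mulVec, mv_dot_aux A⁻¹ u (Cov.mulVec (A⁻¹.mulVec u)),
      mulVec_mulVec, mulVec_mulVec, ← Matrix.mul_assoc, hmat]
  -- abbreviations for part (i)
  set x : Fin p → ℝ := θ1.mulVec (b - βstar) with hxdef
  set y : Fin p → ℝ := (1 - θ1).mulVec βstar with hydef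
  have hw : θ1.mulVec b - βstar = x - y := by
    rw [hxdef, hydef, mulVec_sub, sub_mulVec, one_mulVec]
    abel
  have hNorm : (M.mulVec (θ1.mulVec b - βstar)) ⬝ᵥ (M.mulVec (θ1.mulVec b - βstar))
      = x ⬝ᵥ (Cov.mulVec x) + y ⬝ᵥ (Cov.mulVec y) - 2 * (y ⬝ᵥ (Cov.mulVec x)) := by
    rw [key1, hw, mulVec_sub, dotProduct_sub, sub_dotProduct, sub_dotProduct,
      hsym x y]
    ring
  -- the γ term identity (part ii): ((1-θ1) b)ᵀ Σ ((1-θ1) b) = τ² Q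
  have hQ : ((1 - θ1).mulVec b) ⬝ᵥ (Cov.mulVec ((1 - θ1).mulVec b))
      = τ ^ 2 * (((A⁻¹ * M).mulVec b) ⬝ᵥ ((A⁻¹ * M).mulVec b)) := by
    rw [key2, hθτ, smul_mulVec, smul_dotProduct, mulVec_smul, dotProduct_smul]
    simp only [smul_eq_mul]
    ring
  constructor
  · rw [hR βstar b, hγ b, ← hxdef, ← hydef, hNorm, hT]
    field_simp
    ring
  · rw [hγ b, hR b b, hγ b, hQ, hT]
    simp only [sub_self, mulVec_zero, dotProduct_zero, zero_dotProduct, mul_zero]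
    field_simp
    ring
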